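/- Let T be an infinite rooted tree with root o and finite vertex degrees, let h ∈ (0,1) and q := (2/3)h, and assume every q-island of T is finite. Let t ∈ ℕ and let z ∈ ℕ with z ≥ 2 be such that every vertex of T at graph distance at most t from o has at most z − 1 children. Suppose there exist a finite union U of q-islands of T with q·|U| ≥ 2^{5/6}·t^{1/3}, and a bridge structure B interconnecting {o} ∪ U (i.e. a vertex set B ⊆ T such that B ∪ {o} ∪ U is connected) with dist(o, v) ≤ t for every v ∈ B, satisfying z·|(B ∪ {o}) ∖ A_q| ≤ (h/3)·|U|. Then there exists a finite connected vertex subset K of T with o ∈ K, |K| ≥ 2^{5/6}·t^{1/3}/q, and |∂K| ≤ h·|K|. -/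

import Mathlib

open SimpleGraph

variable {V : Type*}

/-- The edge boundary `∂S` of a vertex set `S`: the set of edges of `G` with one endpoint
in `S` and the other endpoint outside `S`. -/
def edgeBdry (G : SimpleGraph V) (S : Set V) : Set (Sym2 V) :=
  {e | e ∈ G.edgeSet ∧ ∃ x ∈ S, ∃ y ∉ S, e = s(x, y)}

/-- The `q`-isolation `Δ_q S := q·|S| − |∂S|` of a vertex set `S`. -/
noncomputable def isolation (G : SimpleGraph V) (q : ℝ) (S : Set V) : ℝ :=
  q * (S.ncard : ℝ) - ((edgeBdry G S).ncard : ℝ)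

/-- A finite vertex set `S` is a `q`-isolated core if `Δ_q S > Δ_q A` for every
proper subset `A ⊊ S`. -/
def IsIsolatedCore (G : SimpleGraph V) (q : ℝ) (S : Set V) : Prop :=
  S.Finite ∧ ∀ A : Set V, A ⊂ S → isolation G q A < isolation G q S

/-- `A_q`: the union of all `q`-isolated cores of `G`. -/
def coreUnion (G : SimpleGraph V) (q : ℝ) : Set V :=
  ⋃₀ {S : Set V | IsIsolatedCore G q S}

/-- A `q`-island: a connected component of (the subgraph of `G` induced by) `A_q`,
characterised as a nonempty connected subset of `A_q` which is closed under
adjacency within `A_q`. -/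
def IsIsland (G : SimpleGraph V) (q : ℝ) (C : Set V) : Prop :=
  C ⊆ coreUnion G q ∧ (G.induce C).Connected ∧
    ∀ x ∈ C, ∀ y ∈ coreUnion G q, G.Adj x y → y ∈ C

/-- The anchored expansion constant
`i(G) = lim_{n→∞} inf { |∂K|/|K| : o ∈ K ⊆ G connected, n ≤ |K| < ∞ }`;
since the infima are nondecreasing in `n`, the limit equals the supremum over `n`. -/
noncomputable def anchoredExpansion (G : SimpleGraph V) (o : V) : ℝ :=
  ⨆ n : ℕ, sInf {r : ℝ | ∃ K : Set V, o ∈ K ∧ K.Finite ∧ (G.induce K).Connected ∧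
    n ≤ K.ncard ∧ r = ((edgeBdry G K).ncard : ℝ) / (K.ncard : ℝ)}

/-- The set of children of a vertex `x` in the tree rooted at `o`: the neighbours of `x`
at larger graph distance from the root. -/
def children (G : SimpleGraph V) (o x : V) : Set V :=
  {y | G.Adj x y ∧ G.dist o y = G.dist o x + 1}

/-! ### Auxiliary lemmas -/

lemma mem_edgeBdry_of {G : SimpleGraph V} {S : Set V} {x y : V} (hadj : G.Adj x y)
    (hx : x ∈ S) (hy : y ∉ S) : s(x, y) ∈ edgeBdry G S :=
  ⟨hadj, x, hx, y, hy, rfl⟩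

lemma edgeBdry_cases {G : SimpleGraph V} {S : Set V} {e : Sym2 V} (he : e ∈ edgeBdry G S) :
    ∃ x y, G.Adj x y ∧ x ∈ S ∧ y ∉ S ∧ e = s(x, y) := by
  obtain ⟨hes, x, hx, y, hy, rfl⟩ := he
  exact ⟨x, y, hes, hx, hy, rfl⟩

lemma edgeBdry_finite {G : SimpleGraph V} (hloc : ∀ v : V, (G.neighborSet v).Finite)
    {S : Set V} (hS : S.Finite) : (edgeBdry G S).Finite := by
  apply Set.Finite.subset (hS.biUnion (fun x _ => ((hloc x).image (fun y => s(x, y)))))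
  rintro e he
  obtain ⟨x, y, hadj, hx, hy, rfl⟩ := edgeBdry_cases he
  exact Set.mem_biUnion hx ⟨y, hadj, rfl⟩

/-- submodularity of the edge boundary -/
lemma edgeBdry_submod (G : SimpleGraph V) (A C : Set V) :
    edgeBdry G (A ∪ C) ∪ edgeBdry G (A ∩ C) ⊆ edgeBdry G A ∪ edgeBdry G C ∧
    edgeBdry G (A ∪ C) ∩ edgeBdry G (A ∩ C) ⊆ edgeBdry G A ∩ edgeBdry G C := by
  constructor
  · rintro e (he | he)
    · obtain ⟨x, y, hadj, hx, hy, rfl⟩ := edgeBdry_cases he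
      rcases hx with hx | hx
      · exact Or.inl (mem_edgeBdry_of hadj hx (fun hyA => hy (Or.inl hyA)))
      · exact Or.inr (mem_edgeBdry_of hadj hx (fun hyC => hy (Or.inr hyC)))
    · obtain ⟨x, y, hadj, hx, hy, rfl⟩ := edgeBdry_cases he
      by_cases hyA : y ∈ A
      · have hyC : y ∉ C := fun hc => hy ⟨hyA, hc⟩
        exact Or.inr (mem_edgeBdry_of hadj hx.2 hyC)
      · exact Or.inl (mem_edgeBdry_of hadj hx.1 hyA)
  · rintro e ⟨he1, he2⟩
    obtain ⟨x, y, hadj, hx, hy, hxy⟩ := edgeBdry_cases he2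
    obtain ⟨x', y', hadj', hx', hy', hxy'⟩ := edgeBdry_cases he1
    rw [hxy] at hxy'
    rw [Sym2.eq_iff] at hxy'
    have hyout : y ∉ A ∪ C := by
      rcases hxy' with ⟨hx1, hy1⟩ | ⟨hx1, hy1⟩
      · subst hy1; exact hy'
      · subst hx1; exact absurd (Or.inl hx.1) hy'
    rw [hxy]
    exact ⟨mem_edgeBdry_of hadj hx.1 (fun hc => hyout (Or.inl hc)),
      mem_edgeBdry_of hadj hx.2 (fun hc => hyout (Or.inr hc))⟩

lemma isolation_supermod (G : SimpleGraph V) (hloc : ∀ v : V, (G.neighborSet v).Finite)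
    (q : ℝ) {A C : Set V} (hA : A.Finite) (hC : C.Finite) :
    isolation G q A + isolation G q C ≤ isolation G q (A ∪ C) + isolation G q (A ∩ C) := by
  obtain ⟨h1, h2⟩ := edgeBdry_submod G A C
  have fA := edgeBdry_finite hloc hA
  have fC := edgeBdry_finite hloc hC
  have fU := edgeBdry_finite hloc (hA.union hC)
  have fI := edgeBdry_finite hloc (hA.inter_of_left C)
  have hv : (A ∪ C).ncard + (A ∩ C).ncard = A.ncard + C.ncard :=
    Set.ncard_union_add_ncard_inter A C hA hC
  have he : (edgeBdry G (A ∪ C)).ncard + (edgeBdry G (A ∩ C)).ncard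
      ≤ (edgeBdry G A).ncard + (edgeBdry G C).ncard := by
    calc (edgeBdry G (A ∪ C)).ncard + (edgeBdry G (A ∩ C)).ncard
        = (edgeBdry G (A ∪ C) ∪ edgeBdry G (A ∩ C)).ncard
          + (edgeBdry G (A ∪ C) ∩ edgeBdry G (A ∩ C)).ncard :=
          (Set.ncard_union_add_ncard_inter _ _ fU fI).symm
      _ ≤ (edgeBdry G A ∪ edgeBdry G C).ncard + (edgeBdry G A ∩ edgeBdry G C).ncard := by
          exact Nat.add_le_add (Set.ncard_le_ncard h1 (fA.union fC))
            (Set.ncard_le_ncard h2 (fA.inter_of_left _))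
      _ = (edgeBdry G A).ncard + (edgeBdry G C).ncard :=
          Set.ncard_union_add_ncard_inter _ _ fA fC
  simp only [isolation]
  have hv' : ((A ∪ C).ncard : ℝ) + ((A ∩ C).ncard : ℝ) = (A.ncard : ℝ) + (C.ncard : ℝ) := by
    exact_mod_cast congrArg (Nat.cast : ℕ → ℝ) hv
  have he' : ((edgeBdry G (A ∪ C)).ncard : ℝ) + ((edgeBdry G (A ∩ C)).ncard : ℝ)
      ≤ ((edgeBdry G A).ncard : ℝ) + ((edgeBdry G C).ncard : ℝ) := by exact_mod_cast he
  have hq : q * ((A ∪ C).ncard : ℝ) + q * ((A ∩ C).ncard : ℝ)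
      = q * (A.ncard : ℝ) + q * (C.ncard : ℝ) := by
    rw [← mul_add, ← mul_add, hv']
  linarith [hq, he']

lemma core_le {G : SimpleGraph V} {q : ℝ} {S A : Set V} (hS : IsIsolatedCore G q S)
    (hA : A ⊆ S) : isolation G q A ≤ isolation G q S := by
  rcases eq_or_ssubset_of_subset hA with rfl | hss
  · exact le_refl _
  · exact (hS.2 A hss).le

/-- the union of two isolated cores is an isolated core -/
lemma core_union_core {G : SimpleGraph V} (hloc : ∀ v : V, (G.neighborSet v).Finite) {q : ℝ}
    {S₁ S₂ : Set V} (h1 : IsIsolatedCore G q S₁) (h2 : IsIsolatedCore G q S₂) :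
    IsIsolatedCore G q (S₁ ∪ S₂) := by
  refine ⟨h1.1.union h2.1, fun A hA => ?_⟩
  have hAfin : A.Finite := (h1.1.union h2.1).subset hA.subset
  have step1 : isolation G q A ≤ isolation G q (A ∪ S₁) ∧
      (A ∩ S₁ ⊂ S₁ → isolation G q A < isolation G q (A ∪ S₁)) := by
    have hsup := isolation_supermod G hloc q hAfin h1.1
    constructor
    · have := core_le h1 (Set.inter_subset_right (s := A))
      linarith
    · intro hss
      have := h1.2 _ hss
      linarith
  have step2 : isolation G q (A ∪ S₁) ≤ isolation G q (A ∪ S₁ ∪ S₂) ∧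
      ((A ∪ S₁) ∩ S₂ ⊂ S₂ → isolation G q (A ∪ S₁) < isolation G q (A ∪ S₁ ∪ S₂)) := by
    have hsup := isolation_supermod G hloc q (hAfin.union h1.1) h2.1
    constructor
    · have := core_le h2 (Set.inter_subset_right (s := A ∪ S₁))
      linarith
    · intro hss
      have := h2.2 _ hss
      linarith
  have hU : A ∪ S₁ ∪ S₂ = S₁ ∪ S₂ := by
    rw [Set.union_assoc]
    exact Set.union_eq_self_of_subset_left (hA.subset.trans le_rfl)
  rw [hU] at step2
  by_cases hc1 : A ∩ S₁ ⊂ S₁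
  · exact lt_of_lt_of_le (step1.2 hc1) step2.1
  · have hS1A : S₁ ⊆ A := by
      have : A ∩ S₁ = S₁ := by
        rcases eq_or_ssubset_of_subset (Set.inter_subset_right (s := A)) with he | hss
        · exact he
        · exact absurd hss hc1
      intro x hx
      rw [← this] at hx
      exact hx.1
    have hA1 : A ∪ S₁ = A := Set.union_eq_self_of_subset_right hS1A
    rw [hA1] at step2
    have hc2 : A ∩ S₂ ⊂ S₂ := by
      refine ⟨Set.inter_subset_right, fun hsub => ?_⟩
      have hS2A : S₂ ⊆ A := fun x hx => (hsub hx).1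
      exact absurd (Set.union_subset hS1A hS2A) (fun hc => hA.2 hc)
    exact step2.2 hc2

lemma empty_core (G : SimpleGraph V) (q : ℝ) : IsIsolatedCore G q (∅ : Set V) :=
  ⟨Set.finite_empty, fun A hA => absurd hA (by simp [Set.ssubset_def])⟩

lemma sUnion_cores {G : SimpleGraph V} (hloc : ∀ v : V, (G.neighborSet v).Finite) {q : ℝ}
    {I : Set (Set V)} (hIfin : I.Finite) (hI : ∀ S ∈ I, IsIsolatedCore G q S) :
    IsIsolatedCore G q (⋃₀ I) := by
  revert hI
  refine Set.Finite.induction_on _ hIfin ?_ ?_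
  · intro _; simpa using empty_core G q
  · intro a s _ _ ih hI
    rw [Set.sUnion_insert]
    exact core_union_core hloc (hI _ (Set.mem_insert _ _))
      (ih (fun S hS => hI S (Set.mem_insert_of_mem _ hS)))

lemma isolation_empty (G : SimpleGraph V) (q : ℝ) : isolation G q (∅ : Set V) = 0 := by
  simp [isolation, edgeBdry]

/-- additivity of isolation over a split with no cross edges -/
lemma isolation_add_of_no_cross {G : SimpleGraph V}
    (hloc : ∀ v : V, (G.neighborSet v).Finite) (q : ℝ) {S₁ S₂ : Set V}
    (h1 : S₁.Finite) (h2 : S₂.Finite) (hdisj : Disjoint S₁ S₂)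
    (hcross : ∀ x ∈ S₁, ∀ y ∈ S₂, ¬ G.Adj x y) :
    isolation G q (S₁ ∪ S₂) = isolation G q S₁ + isolation G q S₂ := by
  have hbd : edgeBdry G (S₁ ∪ S₂) = edgeBdry G S₁ ∪ edgeBdry G S₂ := by
    ext e
    constructor
    · intro he
      obtain ⟨x, y, hadj, hx, hy, rfl⟩ := edgeBdry_cases he
      rcases hx with hx | hx
      · exact Or.inl (mem_edgeBdry_of hadj hx (fun hc => hy (Or.inl hc)))
      · exact Or.inr (mem_edgeBdry_of hadj hx (fun hc => hy (Or.inr hc)))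
    · rintro (he | he)
      · obtain ⟨x, y, hadj, hx, hy, rfl⟩ := edgeBdry_cases he
        refine mem_edgeBdry_of hadj (Or.inl hx) ?_
        rintro (hc | hc)
        · exact hy hc
        · exact hcross x hx y hc hadj
      · obtain ⟨x, y, hadj, hx, hy, rfl⟩ := edgeBdry_cases he
        refine mem_edgeBdry_of hadj (Or.inr hx) ?_
        rintro (hc | hc)
        · exact hcross y hc x hx hadj.symm
        · exact hy hc
  have hbdisj : Disjoint (edgeBdry G S₁) (edgeBdry G S₂) := by
    rw [Set.disjoint_left]
    intro e he1 he2
    obtain ⟨x, y, hadj, hx, hy, rfl⟩ := edgeBdry_cases he1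
    obtain ⟨x', y', hadj', hx', hy', hxy⟩ := edgeBdry_cases he2
    rw [Sym2.eq_iff] at hxy
    rcases hxy with ⟨rfl, rfl⟩ | ⟨rfl, rfl⟩
    · exact absurd rfl (hdisj.ne_of_mem hx hx')
    · exact hcross x hx y hx' hadj
  have hvcard : (S₁ ∪ S₂).ncard = S₁.ncard + S₂.ncard :=
    Set.ncard_union_eq hdisj h1 h2
  have hecard : (edgeBdry G (S₁ ∪ S₂)).ncard = (edgeBdry G S₁).ncard + (edgeBdry G S₂).ncard := by
    rw [hbd]
    exact Set.ncard_union_eq hbdisj (edgeBdry_finite hloc h1) (edgeBdry_finite hloc h2)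
  simp only [isolation, hvcard, hecard]
  push_cast
  ring

/-- Key lemma: a finite subset of `A_q` closed under adjacency within `A_q` has
nonnegative isolation. -/
lemma isolation_nonneg_of_closed {G : SimpleGraph V}
    (hloc : ∀ v : V, (G.neighborSet v).Finite) {q : ℝ} {D : Set V}
    (hD : D ⊆ coreUnion G q) (hDfin : D.Finite)
    (hclosed : ∀ x ∈ D, ∀ y ∈ coreUnion G q, G.Adj x y → y ∈ D) :
    0 ≤ isolation G q D := by
  rcases D.eq_empty_or_nonempty with rfl | hne
  · rw [isolation_empty]
  have hcov : ∀ x ∈ D, ∃ S : Set V, IsIsolatedCore G q S ∧ x ∈ S := by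
    intro x hx
    obtain ⟨S, hS, hxS⟩ := hD hx
    exact ⟨S, hS, hxS⟩
  choose f hf1 hf2 using hcov
  set I : Set (Set V) := (fun x : D => f x.1 x.2) '' Set.univ with hIdef
  have hIfin : I.Finite := by
    have : Finite D := hDfin
    exact Set.toFinite _
  have hIcores : ∀ S ∈ I, IsIsolatedCore G q S := by
    rintro S ⟨x, _, rfl⟩
    exact hf1 x.1 x.2
  have hScore : IsIsolatedCore G q (⋃₀ I) := sUnion_cores hloc hIfin hIcores
  set S := ⋃₀ I with hSdef
  have hDS : D ⊆ S := by
    intro x hx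
    exact ⟨f x hx, ⟨⟨x, hx⟩, Set.mem_univ _, rfl⟩, hf2 x hx⟩
  have hSA : S ⊆ coreUnion G q := by
    rintro x ⟨Sx, hSx, hxSx⟩
    exact ⟨Sx, hIcores Sx hSx, hxSx⟩
  have hsplit : S = D ∪ (S \ D) := by
    rw [Set.union_diff_cancel hDS]
  have hcross : ∀ x ∈ D, ∀ y ∈ S \ D, ¬ G.Adj x y := by
    intro x hx y hy hadj
    exact hy.2 (hclosed x hx y (hSA hy.1) hadj)
  have hadd : isolation G q S = isolation G q D + isolation G q (S \ D) := by
    have h := isolation_add_of_no_cross hloc q hDfin (hScore.1.diff : (S \ D).Finite)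
      Set.disjoint_sdiff_right hcross
    rw [← hsplit] at h
    exact h
  have hlt : isolation G q (S \ D) < isolation G q S := by
    apply hScore.2
    constructor
    · exact Set.diff_subset
    · intro hsub
      obtain ⟨x, hx⟩ := hne
      have := hsub (hDS hx)
      exact this.2 hx
  linarith

/-- A walk in `G` whose support lies in `S` yields reachability in the induced graph. -/
lemma reachable_induce_of_walk {G : SimpleGraph V} {S : Set V} :
    ∀ {a b : V} (p : G.Walk a b) (_ : ∀ x ∈ p.support, x ∈ S) (ha : a ∈ S) (hb : b ∈ S),
    (G.induce S).Reachable ⟨a, ha⟩ ⟨b, hb⟩ := by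
  intro a b p
  induction p with
  | nil => intro _ _ _; rfl
  | cons hadj p ih =>
    intro hsupp ha hb
    rename_i u v w
    have hv : v ∈ S := hsupp v (by simp)
    have h1 : (G.induce S).Adj ⟨u, ha⟩ ⟨v, hv⟩ := by simp [hadj]
    exact (Adj.reachable h1).trans
      (ih (fun x hx => hsupp x (by simp [Walk.support_cons, hx])) hv hb)

/-- Reachability in an induced graph gives a walk in `G` with support in `S`. -/
lemma walk_of_reachable_induce {G : SimpleGraph V} {S : Set V} {a b : V}
    (ha : a ∈ S) (hb : b ∈ S) (h : (G.induce S).Reachable ⟨a, ha⟩ ⟨b, hb⟩) :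
    ∃ p : G.Walk a b, ∀ x ∈ p.support, x ∈ S := by
  obtain ⟨p⟩ := h
  let f : G.induce S →g G := ⟨Subtype.val, fun hadj => hadj⟩
  refine ⟨p.map f, ?_⟩
  intro x hx
  rw [Walk.support_map, List.mem_map] at hx
  obtain ⟨⟨y, hy⟩, _, rfl⟩ := hx
  exact hy

def islandOf (G : SimpleGraph V) (q : ℝ) (v : V) (hv : v ∈ coreUnion G q) : Set V :=
  {y | ∃ hy : y ∈ coreUnion G q, (G.induce (coreUnion G q)).Reachable ⟨v, hv⟩ ⟨y, hy⟩}

lemma mem_islandOf_self {G : SimpleGraph V} {q : ℝ} {v : V} (hv : v ∈ coreUnion G q) :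
    v ∈ islandOf G q v hv := ⟨hv, Reachable.refl _⟩

lemma islandOf_isIsland {G : SimpleGraph V} {q : ℝ} {v : V} (hv : v ∈ coreUnion G q) :
    IsIsland G q (islandOf G q v hv) := by
  classical
  refine ⟨fun y hy => hy.1, ?_, ?_⟩
  · apply induce_connected_of_patches v (mem_islandOf_self hv)
    intro w hw
    obtain ⟨hwA, hreach⟩ := hw
    obtain ⟨p, hp⟩ := walk_of_reachable_induce hv hwA hreach
    refine ⟨{x | x ∈ p.support}, ?_, p.start_mem_support, p.end_mem_support, ?_⟩
    · intro x hx
      refine ⟨hp x hx, ?_⟩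
      have hsub := p.support_takeUntil_subset hx
      exact reachable_induce_of_walk (p.takeUntil x hx)
        (fun z hz => hp z (hsub hz)) hv (hp x hx)
    · exact reachable_induce_of_walk p (fun z hz => hz) p.start_mem_support p.end_mem_support
  · intro x hx y hy hadj
    refine ⟨hy, hx.2.trans ?_⟩
    exact Adj.reachable (by simp [hadj, hx.1, hy])

/-- In a tree, every path realizes the distance between its endpoints. -/
lemma tree_path_length {G : SimpleGraph V} (htree : G.IsTree) {a b : V}
    {p : G.Walk a b} (hp : p.IsPath) : p.length = G.dist a b := by
  obtain ⟨w, hw, hwlen⟩ := htree.isConnected.exists_path_of_dist a b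
  have huniq := (isAcyclic_iff_path_unique.mp htree.IsAcyclic)
    (⟨p, hp⟩ : G.Path a b) ⟨w, hw⟩
  have hpw : p = w := congrArg Subtype.val huniq
  rw [hpw, hwlen]

/-- Every neighbour of `w` in a tree is either one fixed vertex or a child of `w`. -/
lemma tree_neighborSet_subset {G : SimpleGraph V} (htree : G.IsTree) (o w : V) :
    ∃ u : V, G.neighborSet w ⊆ insert u (children G o w) := by
  classical
  obtain ⟨p, hp, hplen⟩ := htree.isConnected.exists_path_of_dist o w
  refine ⟨p.getVert (p.length - 1), ?_⟩
  intro y hy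
  have hadj : G.Adj w y := hy
  by_cases hys : y ∈ p.support
  · left
    have hdp : (p.dropUntil y hys).IsPath := hp.dropUntil hys
    have hedge : (Walk.cons hadj.symm Walk.nil : G.Walk y w).IsPath := by
      simp [Walk.isPath_def, hadj.ne']
    have huniq := (isAcyclic_iff_path_unique.mp htree.IsAcyclic)
      (⟨p.dropUntil y hys, hdp⟩ : G.Path y w) ⟨Walk.cons hadj.symm Walk.nil, hedge⟩
    have hd : p.dropUntil y hys = Walk.cons hadj.symm Walk.nil := congrArg Subtype.val huniq
    have hspec := p.take_spec hys
    have hlen : (p.takeUntil y hys).length + 1 = p.length := by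
      have := congrArg Walk.length hspec
      rw [Walk.length_append, hd] at this
      simpa using this
    have hgv : ((p.takeUntil y hys).append (p.dropUntil y hys)).getVert
        ((p.takeUntil y hys).length) = y := by
      rw [Walk.getVert_append]
      simp
    rw [hspec] at hgv
    have : p.length - 1 = (p.takeUntil y hys).length := by omega
    rw [this]
    exact hgv.symm
  · right
    have hcp : (p.concat hadj).IsPath := by
      rw [Walk.isPath_def, Walk.support_concat]
      rw [Walk.isPath_def] at hp
      simp [List.nodup_append, hp, hys]
      exact fun a ha h => hys (h ▸ ha)
    have := tree_path_length htree hcp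
    rw [Walk.length_concat, hplen] at this
    exact ⟨hadj, this.symm⟩

/-- Degree bound from the children bound, in a tree. -/
lemma tree_degree_bound {G : SimpleGraph V} (htree : G.IsTree)
    (hloc : ∀ v : V, (G.neighborSet v).Finite) (o w : V) {z : ℕ} (hz : 2 ≤ z)
    (hch : (children G o w).ncard ≤ z - 1) : (G.neighborSet w).ncard ≤ z := by
  obtain ⟨u, hsub⟩ := tree_neighborSet_subset htree o w
  have hchsub : children G o w ⊆ G.neighborSet w := fun y hy => hy.1
  have hchfin : (children G o w).Finite := (hloc w).subset hchsub
  calc (G.neighborSet w).ncard ≤ (insert u (children G o w)).ncard :=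
        Set.ncard_le_ncard hsub (hchfin.insert u)
    _ ≤ (children G o w).ncard + 1 := Set.ncard_insert_le u _
    _ ≤ z := by omega

/-- In a connected locally finite graph, balls are finite. -/
lemma ball_finite {G : SimpleGraph V} (hconn : G.Connected)
    (hloc : ∀ v : V, (G.neighborSet v).Finite) (o : V) (n : ℕ) :
    {v : V | G.dist o v ≤ n}.Finite := by
  induction n with
  | zero =>
    apply Set.Finite.subset (Set.finite_singleton o)
    intro v hv
    simp only [Set.mem_setOf_eq, Nat.le_zero] at hv
    obtain ⟨p, hp⟩ := (hconn o v).exists_walk_length_eq_dist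
    rw [hv] at hp
    cases p with
    | nil => rfl
    | cons h q => simp at hp
  | succ n ih =>
    apply Set.Finite.subset (ih.union (Set.Finite.biUnion ih (fun u _ => hloc u)))
    intro v hv
    simp only [Set.mem_setOf_eq] at hv
    by_cases hvn : G.dist o v ≤ n
    · exact Or.inl hvn
    · have hd : G.dist o v = n + 1 := by omega
      obtain ⟨p, hp⟩ := (hconn o v).exists_walk_length_eq_dist
      rw [hd] at hp
      right
      rcases hq : p.reverse with _ | ⟨hadj, r⟩
      · have := congrArg Walk.length hq
        simp [hp] at this
      · rename_i u
        have hrlen : r.length = n := by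
          have := congrArg Walk.length hq
          simp [hp] at this
          omega
        have hdu : G.dist o u ≤ n := by
          have := dist_le r.reverse
          simpa [hrlen] using this
        exact Set.mem_biUnion hdu hadj.symm

lemma incident_set_eq (G : SimpleGraph V) (a : V) :
    {e ∈ G.edgeSet | a ∈ e} = (fun y => s(a, y)) '' G.neighborSet a := by
  ext e
  constructor
  · rintro ⟨he, hae⟩
    obtain ⟨b, rfl⟩ := Sym2.mem_iff_exists.mp hae
    exact ⟨b, (G.mem_edgeSet).mp he, rfl⟩
  · rintro ⟨b, hb, rfl⟩
    exact ⟨(G.mem_edgeSet).mpr hb, Sym2.mem_mk_left a b⟩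

lemma incident_finite {G : SimpleGraph V} (hloc : ∀ v : V, (G.neighborSet v).Finite)
    {W : Set V} (hW : W.Finite) : {e ∈ G.edgeSet | ∃ w ∈ W, w ∈ e}.Finite := by
  apply Set.Finite.subset (hW.biUnion (fun w _ => ((hloc w).image (fun y => s(w, y)))))
  rintro e ⟨he, w, hw, hwe⟩
  obtain ⟨b, rfl⟩ := Sym2.mem_iff_exists.mp hwe
  exact Set.mem_biUnion hw ⟨b, (G.mem_edgeSet).mp he, rfl⟩

lemma incident_card_le {G : SimpleGraph V} (hloc : ∀ v : V, (G.neighborSet v).Finite)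
    {W : Set V} (hW : W.Finite) {z : ℕ} (hdeg : ∀ w ∈ W, (G.neighborSet w).ncard ≤ z) :
    {e ∈ G.edgeSet | ∃ w ∈ W, w ∈ e}.ncard ≤ z * W.ncard := by
  revert hdeg
  refine Set.Finite.induction_on _ hW ?_ ?_
  · intro _
    simp
  · intro a s ha hs ih hdeg
    have h1 : {e ∈ G.edgeSet | ∃ w ∈ insert a s, w ∈ e}
        ⊆ {e ∈ G.edgeSet | a ∈ e} ∪ {e ∈ G.edgeSet | ∃ w ∈ s, w ∈ e} := by
      rintro e ⟨he, w, hw, hwe⟩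
      rcases hw with rfl | hw
      · exact Or.inl ⟨he, hwe⟩
      · exact Or.inr ⟨he, w, hw, hwe⟩
    calc {e ∈ G.edgeSet | ∃ w ∈ insert a s, w ∈ e}.ncard
        ≤ ({e ∈ G.edgeSet | a ∈ e} ∪ {e ∈ G.edgeSet | ∃ w ∈ s, w ∈ e}).ncard := by
          refine Set.ncard_le_ncard h1 ?_
          apply Set.Finite.union
          · rw [incident_set_eq]; exact (hloc a).image _
          · exact incident_finite hloc hs
      _ ≤ {e ∈ G.edgeSet | a ∈ e}.ncard + {e ∈ G.edgeSet | ∃ w ∈ s, w ∈ e}.ncard :=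
          Set.ncard_union_le _ _
      _ ≤ z + z * s.ncard := by
          apply Nat.add_le_add
          · rw [incident_set_eq]
            exact le_trans (Set.ncard_image_le (hloc a)) (hdeg a (Set.mem_insert _ _))
          · exact ih (fun w hw => hdeg w (Set.mem_insert_of_mem _ hw))
      _ ≤ z * (insert a s).ncard := by
          rw [Set.ncard_insert_of_notMem ha hs]
          ring_nf
          omega

/-- Let `T` be an infinite rooted tree with root `o` and finite vertex degrees, let
`h ∈ (0,1)` and `q := (2/3)h`, and assume every `q`-island of `T` is finite. Let `t ∈ ℕ`
and let `z ∈ ℕ` with `z ≥ 2` be such that every vertex of `T` at graph distance at most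
`t` from `o` has at most `z − 1` children. Suppose there exist a finite union `U` of
`q`-islands of `T` with `q·|U| ≥ 2^{5/6}·t^{1/3}`, and a bridge structure `B`
interconnecting `{o} ∪ U` (i.e. a vertex set `B ⊆ T` such that `B ∪ {o} ∪ U` is
connected) with `dist(o, v) ≤ t` for every `v ∈ B`, satisfying
`z·|(B ∪ {o}) ∖ A_q| ≤ (h/3)·|U|`. Then there exists a finite connected vertex subset `K`
of `T` with `o ∈ K`, `|K| ≥ 2^{5/6}·t^{1/3}/q`, and `|∂K| ≤ h·|K|`. -/
theorem stmt13 (T : SimpleGraph V) [Infinite V] (htree : T.IsTree)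
    (hloc : ∀ v : V, (T.neighborSet v).Finite) (o : V)
    (h q : ℝ) (hh0 : 0 < h) (hh1 : h < 1) (hqdef : q = 2 / 3 * h)
    (hislands : ∀ C : Set V, IsIsland T q C → C.Finite)
    (t z : ℕ) (hz : 2 ≤ z)
    (hchild : ∀ x : V, T.dist o x ≤ t → (children T o x).ncard ≤ z - 1)
    (U B : Set V)
    (hU : ∃ I : Set (Set V), I.Finite ∧ (∀ C ∈ I, IsIsland T q C) ∧ U = ⋃₀ I)
    (hUfin : U.Finite)
    (hUcard : (2 : ℝ) ^ ((5 : ℝ) / 6) * (t : ℝ) ^ ((1 : ℝ) / 3) ≤ q * (U.ncard : ℝ))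
    (hBconn : (T.induce (B ∪ {o} ∪ U)).Connected)
    (hBdist : ∀ v ∈ B, T.dist o v ≤ t)
    (hsmall : (z : ℝ) * (((B ∪ {o}) \ coreUnion T q).ncard : ℝ) ≤ h / 3 * (U.ncard : ℝ)) :
    ∃ K : Set V, K.Finite ∧ o ∈ K ∧ (T.induce K).Connected ∧
      (2 : ℝ) ^ ((5 : ℝ) / 6) * (t : ℝ) ^ ((1 : ℝ) / 3) / q ≤ (K.ncard : ℝ) ∧
      ((edgeBdry T K).ncard : ℝ) ≤ h * (K.ncard : ℝ) := by
  classical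
  subst hqdef
  set q : ℝ := 2 / 3 * h with hqdef
  have hq0 : 0 < q := by rw [hqdef]; linarith
  obtain ⟨I, hIfin, hIisl, hUeq⟩ := hU
  set A : Set V := coreUnion T q with hA
  set BO : Set V := B ∪ {o} with hBO
  have hBOdist : ∀ v ∈ BO, T.dist o v ≤ t := by
    rintro v (hv | hv)
    · exact hBdist v hv
    · rw [Set.mem_singleton_iff.mp hv, SimpleGraph.dist_self]
      omega
  have hBOfin : BO.Finite := by
    apply (ball_finite htree.isConnected hloc o t).subset
    exact fun v hv => hBOdist v hv
  -- the extra islands: those of points of BO ∩ A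
  set E : Set V := ⋃ v : ↥(BO ∩ A), islandOf T q v.1 v.2.2 with hE
  have hEfin : E.Finite := by
    have : Finite ↥(BO ∩ A) := (hBOfin.inter_of_left A).to_subtype
    exact Set.finite_iUnion (fun v => hislands _ (islandOf_isIsland v.2.2))
  have hEsub : E ⊆ A := by
    rintro x hx
    rw [Set.mem_iUnion] at hx
    obtain ⟨v, hv⟩ := hx
    exact hv.1
  have hUsub : U ⊆ A := by
    rw [hUeq]
    rintro x ⟨C, hC, hxC⟩
    exact (hIisl C hC).1 hxC
  set U' : Set V := U ∪ E with hU'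
  set W : Set V := BO \ A with hW
  set K : Set V := BO ∪ U' with hK
  have hKfin : K.Finite := (hBOfin.union (hUfin.union hEfin))
  have hoK : o ∈ K := Or.inl (Or.inr rfl)
  -- K = W ∪ U'
  have hKWU : K = W ∪ U' := by
    apply Set.Subset.antisymm
    · rintro x (hx | hx)
      · by_cases hxA : x ∈ A
        · refine Or.inr (Or.inr ?_)
          rw [Set.mem_iUnion]
          exact ⟨⟨x, hx, hxA⟩, mem_islandOf_self _⟩
        · exact Or.inl ⟨hx, hxA⟩
      · exact Or.inr hx
    · rintro x (⟨hx, _⟩ | hx)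
      · exact Or.inl hx
      · exact Or.inr hx
  have hU'sub : U' ⊆ A := Set.union_subset hUsub hEsub
  have hU'fin : U'.Finite := hUfin.union hEfin
  -- U' is closed under adjacency within A
  have hU'closed : ∀ x ∈ U', ∀ y ∈ A, T.Adj x y → y ∈ U' := by
    rintro x (hx | hx) y hy hadj
    · rw [hUeq] at hx
      obtain ⟨C, hC, hxC⟩ := hx
      refine Or.inl ?_
      rw [hUeq]
      exact ⟨C, hC, (hIisl C hC).2.2 x hxC y hy hadj⟩
    · rw [Set.mem_iUnion] at hx
      obtain ⟨v, hv⟩ := hx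
      refine Or.inr ?_
      rw [Set.mem_iUnion]
      exact ⟨v, (islandOf_isIsland v.2.2).2.2 x hv y hy hadj⟩
  -- connectivity of K
  have hKconn : (T.induce K).Connected := by
    apply induce_connected_of_patches o hoK
    intro v hv
    have hS0sub : B ∪ {o} ∪ U ⊆ K := by
      rintro x (hx | hx)
      · exact Or.inl hx
      · exact Or.inr (Or.inl hx)
    rcases hv with hv | (hv | hv)
    · exact ⟨B ∪ {o} ∪ U, hS0sub, Or.inl (Or.inr rfl), Or.inl hv,
        hBconn.preconnected _ _⟩
    · exact ⟨B ∪ {o} ∪ U, hS0sub, Or.inl (Or.inr rfl), Or.inr hv,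
        hBconn.preconnected _ _⟩
    · -- v in an extra island
      rw [Set.mem_iUnion] at hv
      obtain ⟨w, hvw⟩ := hv
      set C : Set V := islandOf T q w.1 w.2.2 with hC
      have hCconn : (T.induce C).Connected := (islandOf_isIsland w.2.2).2.1
      have hCK : C ⊆ K := fun x hx => Or.inr (Or.inr (Set.mem_iUnion.mpr ⟨w, hx⟩))
      have hwint : w.1 ∈ (B ∪ {o} ∪ U) ∩ C := ⟨Or.inl w.2.1, mem_islandOf_self _⟩
      refine ⟨(B ∪ {o} ∪ U) ∪ C, Set.union_subset hS0sub hCK,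
        Or.inl (Or.inl (Or.inr rfl)), Or.inr hvw, ?_⟩
      exact (induce_union_connected hBconn.preconnected hCconn.preconnected ⟨w.1, hwint⟩).preconnected _ _
  -- cardinality bound
  have hUK : U ⊆ K := fun x hx => Or.inr (Or.inl hx)
  have hcard : (U.ncard : ℝ) ≤ (K.ncard : ℝ) := by
    exact_mod_cast Set.ncard_le_ncard hUK hKfin
  have hsize : (2 : ℝ) ^ ((5 : ℝ) / 6) * (t : ℝ) ^ ((1 : ℝ) / 3) / q ≤ (K.ncard : ℝ) := by
    rw [div_le_iff₀ hq0]
    calc (2 : ℝ) ^ ((5 : ℝ) / 6) * (t : ℝ) ^ ((1 : ℝ) / 3) ≤ q * (U.ncard : ℝ) := hUcard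
      _ ≤ q * (K.ncard : ℝ) := by
          exact mul_le_mul_of_nonneg_left hcard hq0.le
      _ = (K.ncard : ℝ) * q := mul_comm _ _
  -- boundary bound
  have hWfin : W.Finite := hBOfin.diff
  have hdegW : ∀ w ∈ W, (T.neighborSet w).ncard ≤ z := by
    intro w hw
    exact tree_degree_bound htree hloc o w hz (hchild w (hBOdist w hw.1))
  have hincW := incident_card_le hloc hWfin hdegW
  have hbdsub : edgeBdry T K ⊆ edgeBdry T U' ∪ {e ∈ T.edgeSet | ∃ w ∈ W, w ∈ e} := by
    intro e he
    obtain ⟨x, y, hadj, hx, hy, rfl⟩ := edgeBdry_cases he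
    rw [hKWU] at hx
    rcases hx with hx | hx
    · exact Or.inr ⟨hadj, x, hx, Sym2.mem_mk_left x y⟩
    · refine Or.inl (mem_edgeBdry_of hadj hx ?_)
      intro hc
      exact hy (hKWU ▸ Or.inr hc)
  have hbdK : (edgeBdry T K).ncard
      ≤ (edgeBdry T U').ncard + {e ∈ T.edgeSet | ∃ w ∈ W, w ∈ e}.ncard := by
    calc (edgeBdry T K).ncard
        ≤ (edgeBdry T U' ∪ {e ∈ T.edgeSet | ∃ w ∈ W, w ∈ e}).ncard :=
          Set.ncard_le_ncard hbdsub
            ((edgeBdry_finite hloc hU'fin).union (incident_finite hloc hWfin))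
      _ ≤ _ := Set.ncard_union_le _ _
  have hisoU' : 0 ≤ isolation T q U' :=
    isolation_nonneg_of_closed hloc hU'sub hU'fin hU'closed
  have hbdU' : ((edgeBdry T U').ncard : ℝ) ≤ q * (U'.ncard : ℝ) := by
    rw [isolation] at hisoU'
    linarith
  have hU'K : (U'.ncard : ℝ) ≤ (K.ncard : ℝ) := by
    exact_mod_cast Set.ncard_le_ncard (Set.subset_union_right (s := BO)) hKfin
  have hfinal : ((edgeBdry T K).ncard : ℝ) ≤ h * (K.ncard : ℝ) := by
    have h1 : ((edgeBdry T K).ncard : ℝ)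
        ≤ ((edgeBdry T U').ncard : ℝ) + ({e ∈ T.edgeSet | ∃ w ∈ W, w ∈ e}.ncard : ℝ) := by
      exact_mod_cast hbdK
    have h2 : ({e ∈ T.edgeSet | ∃ w ∈ W, w ∈ e}.ncard : ℝ) ≤ (z : ℝ) * (W.ncard : ℝ) := by
      exact_mod_cast hincW
    have h3 : (z : ℝ) * (W.ncard : ℝ) ≤ h / 3 * (U.ncard : ℝ) := hsmall
    have h4 : q * (U'.ncard : ℝ) ≤ q * (K.ncard : ℝ) :=
      mul_le_mul_of_nonneg_left hU'K hq0.le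
    have h5 : h / 3 * (U.ncard : ℝ) ≤ h / 3 * (K.ncard : ℝ) :=
      mul_le_mul_of_nonneg_left hcard (by linarith)
    rw [hqdef] at hbdU' h4
    linarith
  exact ⟨K, hKfin, hoK, hKconn, hsize, hfinal⟩
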